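/- Let G be a group, M a G-module, and g a central element of G such that g - 1 acts invertibly on M. Then H¹(G, M) = 0 (Sah's lemma). -/

import Mathlib

/-- Sah's lemma: let `G` be a group, `M` a `G`-module, and `g` a central element of `G`
such that `g - 1` acts invertibly on `M`.  Then `H¹(G, M) = 0`. -/
theorem stmt_16 (G : Type) [Group G] (M : Rep ℤ G)
    (g : G) (hg : g ∈ Subgroup.center G)
    (hbij : Function.Bijective (fun m : M => M.ρ g m - m)) :
    ∀ x : groupCohomology.H1 M, x = 0 := by
  have htop : ∀ f : groupCohomology.cocycles₁ M, ⇑f ∈ groupCohomology.coboundaries₁ M := by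
    intro f
    rw [groupCohomology.coboundaries₁]
    obtain ⟨x, hx⟩ := hbij.surjective (f g)
    refine ⟨x, funext fun h => hbij.injective ?_⟩
    show M.ρ g (M.ρ h x - x) - (M.ρ h x - x) = M.ρ g (f h) - f h
    have hcomm : M.ρ g (M.ρ h x) = M.ρ h (M.ρ g x) := by
      have hc := congrArg M.ρ (Subgroup.mem_center_iff.1 hg h)
      simp only [map_mul] at hc
      simpa using (DFunLike.congr_fun hc x).symm
    have h1 : M.ρ g (f h) - f h = M.ρ h (f g) - f g := by
      have e1 := (groupCohomology.mem_cocycles₁_iff (f : G → M)).1 f.2 g h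
      have e2 := (groupCohomology.mem_cocycles₁_iff (f : G → M)).1 f.2 h g
      rw [Subgroup.mem_center_iff.1 hg h] at e2
      exact sub_eq_sub_iff_add_eq_add.2 (e1.symm.trans e2)
    rw [h1, ← hx]
    simp only [map_sub, hcomm]
    abel
  exact fun x => groupCohomology.H1_induction_on x fun y =>
    (groupCohomology.H1π_eq_zero_iff y).2 (htop y)
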